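/- Let A₁,...,Aₘ be Banach algebras with identities e₁,...,eₘ, and let A = ⊕ᵢAᵢ be their Banach algebra direct sum. Let M be a Banach A-bimodule and let B be the closed subalgebra of A generated by {e₁,...,eₘ}. Then for n ≥ 1 every B-relative n-cochain ρ ∈ C_Bⁿ(A,M) satisfies ρ(a₁,...,aₙ) = Σ_{i=1}^{m} eᵢ·ρ(a₁eᵢ, a₂eᵢ, ..., aₙeᵢ)·eᵢ for all a₁,...,aₙ ∈ A, and the maps ρ ↦ (ρ|_{A₁},...,ρ|_{Aₘ}) and back define mutually inverse bounded linear isomorphisms between C_Bⁿ(A,M) and ⊕ᵢ Cⁿ(Aᵢ, eᵢMeᵢ). -/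

import Mathlib

open Finset Function
set_option linter.unusedSectionVars false
set_option maxHeartbeats 1000000

section Aux

variable {m : ℕ} {A : Fin m → Type*}
  [∀ i, NormedRing (A i)] [∀ i, NormedAlgebra ℂ (A i)]
  {M : Type*} [NormedAddCommGroup M] [NormedSpace ℂ M] {n : ℕ}

private lemma mul_single_one (a : ∀ i, A i) (i : Fin m) :
    a * Pi.single i 1 = Pi.single i (a i) := by
  funext j
  rcases eq_or_ne j i with h | h
  · subst h; simp [Pi.mul_apply]
  · simp [Pi.mul_apply, Pi.single_eq_of_ne h]

private lemma single_one_mul (a : ∀ i, A i) (i : Fin m) :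
    Pi.single i 1 * a = Pi.single i (a i) := by
  funext j
  rcases eq_or_ne j i with h | h
  · subst h; simp [Pi.mul_apply]
  · simp [Pi.mul_apply, Pi.single_eq_of_ne h]

private lemma single_mul_single_same (i : Fin m) :
    (Pi.single i 1 : ∀ i, A i) * Pi.single i 1 = Pi.single i 1 := by
  rw [mul_single_one, Pi.single_eq_same]

private lemma single_mul_single_ne {i j : Fin m} (h : i ≠ j) :
    (Pi.single i 1 : ∀ i, A i) * Pi.single j 1 = 0 := by
  rw [mul_single_one, Pi.single_eq_of_ne (Ne.symm h), Pi.single_zero]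

private lemma sum_single_one : (∑ i, Pi.single i 1 : ∀ i, A i) = 1 := by
  simpa using Finset.univ_sum_single (1 : ∀ i, A i)

private lemma update_proj (a : Fin (n + 1) → ∀ i, A i) (p : Fin (n + 1)) (x : ∀ i, A i)
    (j : Fin m) :
    (fun k => Function.update a p x k j) = Function.update (fun k => a k j) p (x j) := by
  funext k; exact Function.apply_update (fun _ v => v j) a p x k

private lemma sum_proj_eq (σ : ∀ i, ContinuousMultilinearMap ℂ (fun _ : Fin (n + 1) => A i) M)
    (w : Fin (n + 1) → ∀ i, A i) (i : Fin m) (k₀ : Fin (n + 1))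
    (h : ∀ j, j ≠ i → w k₀ j = 0) :
    ∑ j, σ j (fun k => w k j) = σ i (fun k => w k i) := by
  refine Finset.sum_eq_single i (fun j _ hj => ?_) (fun h => absurd (Finset.mem_univ i) h)
  exact (σ j).map_coord_zero k₀ (h j hj)

private lemma nonconst_adj {f : Fin (n + 1) → Fin m}
    (h : ∀ i : Fin m, f ≠ fun _ => i) : ∃ j : Fin n, f j.castSucc ≠ f j.succ := by
  by_contra hc
  push_neg at hc
  apply h (f 0)
  funext k
  induction k using Fin.induction with
  | zero => rfl
  | succ i ih => rw [← hc i]; exact ih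

private lemma diag (ρ : ContinuousMultilinearMap ℂ (fun _ : Fin (n + 1) => ∀ i, A i) M)
    (hQ : ∀ i : Fin m, ∀ a : Fin (n + 1) → ∀ i, A i, ∀ j : Fin n,
      ρ (Function.update a j.castSucc (a j.castSucc * Pi.single i 1))
        = ρ (Function.update a j.succ (Pi.single i 1 * a j.succ)))
    (a : Fin (n + 1) → ∀ i, A i) :
    ρ a = ∑ i, ρ (fun k => a k * Pi.single i 1) := by
  have h0 : ∀ f : Fin (n + 1) → Fin m, (∃ j : Fin n, f j.castSucc ≠ f j.succ) →
      ρ (fun k => a k * Pi.single (f k) 1) = 0 := by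
    rintro f ⟨j, hj⟩
    set v : Fin (n + 1) → ∀ i, A i := fun k => a k * Pi.single (f k) 1 with hv
    have h1 : v = Function.update v j.castSucc (v j.castSucc * Pi.single (f j.castSucc) 1) := by
      rw [hv]
      simp only [mul_assoc, single_mul_single_same]
      rw [Function.update_eq_self]
    rw [h1, hQ (f j.castSucc) v j]
    apply ρ.map_coord_zero j.succ
    rw [Function.update_self, single_one_mul]
    have : v j.succ (f j.castSucc) = 0 := by
      rw [hv]
      simp only [Pi.mul_apply]
      rw [Pi.single_eq_of_ne hj, mul_zero]
    rw [this, Pi.single_zero]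
  have expand : ρ a = ∑ f : Fin (n + 1) → Fin m, ρ (fun k => a k * Pi.single (f k) 1) := by
    have : a = fun k => ∑ i, a k * Pi.single i 1 := by
      funext k
      rw [← Finset.mul_sum, sum_single_one, mul_one]
    conv_lhs => rw [this]
    exact ρ.toMultilinearMap.map_sum (fun k i => a k * Pi.single i 1)
  rw [expand]
  have himg : ∑ f ∈ Finset.univ.image (fun i => (fun _ : Fin (n + 1) => i)),
      ρ (fun k => a k * Pi.single (f k) 1) = ∑ i, ρ (fun k => a k * Pi.single i 1) :=
    Finset.sum_image (fun i _ i' _ h => congrFun h 0)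
  rw [← himg]
  refine (Finset.sum_subset (Finset.subset_univ _) (fun f _ hf => ?_)).symm
  exact h0 f (nonconst_adj fun i hfi => hf (Finset.mem_image.2 ⟨i, Finset.mem_univ i, hfi.symm⟩))

private lemma one_mem_span :
    (1 : ∀ i, A i) ∈ Submodule.span ℂ (Set.range fun i => (Pi.single i 1 : ∀ i, A i)) := by
  rw [← sum_single_one]
  exact Submodule.sum_mem _ fun i _ => Submodule.subset_span ⟨i, rfl⟩

private lemma mul_mem_span {x y : ∀ i, A i}
    (hx : x ∈ Submodule.span ℂ (Set.range fun i => (Pi.single i 1 : ∀ i, A i)))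
    (hy : y ∈ Submodule.span ℂ (Set.range fun i => (Pi.single i 1 : ∀ i, A i))) :
    x * y ∈ Submodule.span ℂ (Set.range fun i => (Pi.single i 1 : ∀ i, A i)) := by
  induction hx using Submodule.span_induction with
  | mem x hx =>
    induction hy using Submodule.span_induction with
    | mem y hy =>
      obtain ⟨i, rfl⟩ := hx; obtain ⟨j, rfl⟩ := hy
      rcases eq_or_ne i j with h | h
      · subst h; rw [single_mul_single_same]; exact Submodule.subset_span ⟨i, rfl⟩
      · rw [single_mul_single_ne h]; exact Submodule.zero_mem _
    | zero => rw [mul_zero]; exact Submodule.zero_mem _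
    | add y z _ _ ih ih2 => rw [mul_add]; exact Submodule.add_mem _ ih ih2
    | smul c y _ ih => rw [mul_smul_comm]; exact Submodule.smul_mem _ _ ih
  | zero => rw [zero_mul]; exact Submodule.zero_mem _
  | add x z _ _ ih ih2 => rw [add_mul]; exact Submodule.add_mem _ ih ih2
  | smul c x _ ih => rw [smul_mul_assoc]; exact Submodule.smul_mem _ _ ih

private lemma B_subset_span {x : ∀ i, A i}
    (hx : x ∈ closure ((Algebra.adjoin ℂ
        (Set.range fun i => (Pi.single i 1 : ∀ i, A i)) : Subalgebra ℂ (∀ i, A i)) :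
        Set (∀ i, A i))) :
    x ∈ Submodule.span ℂ (Set.range fun i => (Pi.single i 1 : ∀ i, A i)) := by
  have hfd : FiniteDimensional ℂ
      (Submodule.span ℂ (Set.range fun i => (Pi.single i 1 : ∀ i, A i))) :=
    FiniteDimensional.span_of_finite ℂ (Set.finite_range _)
  have hcl : IsClosed
      ((Submodule.span ℂ (Set.range fun i => (Pi.single i 1 : ∀ i, A i)) :
        Submodule ℂ (∀ i, A i)) : Set (∀ i, A i)) :=
    Submodule.closed_of_finiteDimensional _
  refine closure_minimal ?_ hcl hx
  intro y hy
  induction hy using Algebra.adjoin_induction with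
  | mem y hy => exact Submodule.subset_span hy
  | algebraMap r =>
    show (algebraMap ℂ (∀ i, A i) r) ∈ _
    rw [Algebra.algebraMap_eq_smul_one]
    exact Submodule.smul_mem _ _ one_mem_span
  | add x y _ _ ih ih2 => exact Submodule.add_mem _ ih ih2
  | mul x y _ _ ih ih2 => exact mul_mem_span ih ih2

private noncomputable def singleCLM (A : Fin m → Type*) [∀ i, NormedRing (A i)] [∀ i, NormedAlgebra ℂ (A i)]
    (i : Fin m) : A i →L[ℂ] ∀ j, A j :=
  LinearMap.mkContinuous (LinearMap.single ℂ A i) 1 fun x => by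
    rw [one_mul]
    show ‖Pi.single i x‖ ≤ ‖x‖
    exact le_of_eq (Pi.norm_single x)

private lemma singleCLM_apply (i : Fin m) (x : A i) : singleCLM A i x = Pi.single i x := rfl

private lemma norm_singleCLM_le (i : Fin m) : ‖singleCLM A i‖ ≤ 1 :=
  LinearMap.mkContinuous_norm_le _ zero_le_one _

private lemma norm_projCLM_le (i : Fin m) :
    ‖(ContinuousLinearMap.proj i : (∀ j, A j) →L[ℂ] A i)‖ ≤ 1 :=
  ContinuousLinearMap.opNorm_le_bound _ zero_le_one fun x => by
    rw [one_mul]; exact norm_le_pi_norm x i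

end Aux



/-!
STATEMENT 9: Let `A = ⊕ᵢ Aᵢ` be a finite direct sum of unital Banach algebras,
`M` a Banach `A`-bimodule and `B` the closed subalgebra of `A` generated by the
idempotents `eᵢ = Pi.single i 1`.  Then every `B`-relative `n`-cochain `ρ`
satisfies `ρ(a₁,...,aₙ) = Σᵢ eᵢ·ρ(a₁eᵢ,...,aₙeᵢ)·eᵢ`, and the restriction maps
`ρ ↦ (ρᵢ)` and the reconstruction map are mutually inverse bounded linear
isomorphisms between `C_Bⁿ(A,M)` and `⊕ᵢ Cⁿ(Aᵢ, eᵢMeᵢ)`.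
(Degrees are written `n + 1`, covering all `n ≥ 1`.)
-/

open Finset

theorem relative_cochains_of_direct_sum
    {m : ℕ} {A : Fin m → Type*}
    [∀ i, NormedRing (A i)] [∀ i, NormedAlgebra ℂ (A i)] [∀ i, CompleteSpace (A i)]
    {M : Type*} [NormedAddCommGroup M] [NormedSpace ℂ M] [CompleteSpace M]
    -- bimodule actions of `A = ⊕ᵢ Aᵢ = ∀ i, A i` on `M`
    (l : (∀ i, A i) →L[ℂ] M →L[ℂ] M) (r : M →L[ℂ] (∀ i, A i) →L[ℂ] M)
    (hl : ∀ (a b : ∀ i, A i) (x : M), l (a * b) x = l a (l b x))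
    (hr : ∀ (x : M) (a b : ∀ i, A i), r (r x a) b = r x (a * b))
    (hc : ∀ (a : ∀ i, A i) (x : M) (b : ∀ i, A i), l a (r x b) = r (l a x) b)
    (n : ℕ) :
    -- `e i` is the `i`-th canonical central idempotent, `B` the closed
    -- subalgebra generated by the `e i`
    let e : Fin m → (∀ i, A i) := fun i => Pi.single i 1
    let B : Set (∀ i, A i) :=
      closure ((Algebra.adjoin ℂ (Set.range e) : Subalgebra ℂ (∀ i, A i)) :
        Set (∀ i, A i))
    -- `B`-relativity of an `(n+1)`-cochain
    let Rel : ((Fin (n + 1) → ∀ i, A i) → M) → Prop := fun ρ =>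
      (∀ b ∈ B, ∀ a : Fin (n + 1) → ∀ i, A i,
          ρ (Function.update a 0 (b * a 0)) = l b (ρ a)) ∧
      (∀ b ∈ B, ∀ a : Fin (n + 1) → ∀ i, A i, ∀ j : Fin n,
          ρ (Function.update a j.castSucc (a j.castSucc * b))
            = ρ (Function.update a j.succ (b * a j.succ))) ∧
      (∀ b ∈ B, ∀ a : Fin (n + 1) → ∀ i, A i,
          ρ (Function.update a (Fin.last n) (a (Fin.last n) * b)) = r (ρ a) b)
    -- the reconstruction map `G`
    let G : (∀ i, (Fin (n + 1) → A i) → M) → (Fin (n + 1) → ∀ i, A i) → M :=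
      fun σ a => ∑ i, σ i (fun k => a k i)
    -- (1) the decomposition identity for `B`-relative cochains
    (∀ ρ : ContinuousMultilinearMap ℂ (fun _ : Fin (n + 1) => ∀ i, A i) M,
      Rel (⇑ρ) → ∀ a : Fin (n + 1) → ∀ i, A i,
        ρ a = ∑ i, l (e i) (r (ρ fun k => a k * e i) (e i)))
    -- (2) `G ∘ J = id` on `B`-relative cochains
    ∧ (∀ ρ : ContinuousMultilinearMap ℂ (fun _ : Fin (n + 1) => ∀ i, A i) M,
      Rel (⇑ρ) →
        G (fun i v => ρ fun k => Pi.single i (v k)) = ⇑ρ)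
    -- (3) `J ∘ G = id` on families of bounded cochains valued in `eᵢMeᵢ`
    ∧ (∀ σ : ∀ i, ContinuousMultilinearMap ℂ (fun _ : Fin (n + 1) => A i) M,
      (∀ i v, l (e i) (r (σ i v) (e i)) = σ i v) →
        ∀ i (v : Fin (n + 1) → A i),
          G (fun j w => σ j w) (fun k => Pi.single i (v k)) = σ i v)
    -- (4) both maps are bounded: `J` does not increase norms, and `G` produces
    -- a bounded `B`-relative multilinear cochain
    ∧ (∀ ρ : ContinuousMultilinearMap ℂ (fun _ : Fin (n + 1) => ∀ i, A i) M,
      Rel (⇑ρ) → ∀ i, ∃ ρi : ContinuousMultilinearMap ℂ (fun _ : Fin (n + 1) => A i) M,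
        (⇑ρi = fun v => ρ fun k => Pi.single i (v k)) ∧ ‖ρi‖ ≤ ‖ρ‖)
    ∧ (∀ σ : ∀ i, ContinuousMultilinearMap ℂ (fun _ : Fin (n + 1) => A i) M,
      (∀ i v, l (e i) (r (σ i v) (e i)) = σ i v) →
        ∃ τ : ContinuousMultilinearMap ℂ (fun _ : Fin (n + 1) => ∀ i, A i) M,
          (⇑τ = G fun i => ⇑(σ i)) ∧ Rel (⇑τ) ∧ ‖τ‖ ≤ ∑ i, ‖σ i‖) := by
  intro e B Rel G
  have he : ∀ i, e i = Pi.single i 1 := fun _ => rfl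
  have heB : ∀ i, e i ∈ B := fun i => subset_closure (Algebra.subset_adjoin ⟨i, rfl⟩)
  have hdiag : ∀ ρ : ContinuousMultilinearMap ℂ (fun _ : Fin (n + 1) => ∀ i, A i) M,
      Rel (⇑ρ) → ∀ a : Fin (n + 1) → ∀ i, A i,
        ρ a = ∑ i, ρ (fun k => a k * Pi.single i 1) := by
    intro ρ hρ a
    exact diag ρ (fun i a j => hρ.2.1 (e i) (heB i) a j) a
  refine ⟨?_, ?_, ?_, ?_, ?_⟩
  -- (1)
  · intro ρ hρ a
    simp only [he]
    rw [hdiag ρ hρ a]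
    refine Finset.sum_congr rfl fun i _ => ?_
    set v : Fin (n + 1) → ∀ i, A i := fun k => a k * Pi.single i 1 with hv
    have hfixl : Function.update v (Fin.last n) (v (Fin.last n) * Pi.single i 1) = v := by
      rw [hv]
      simp only [mul_assoc, single_mul_single_same]
      exact Function.update_eq_self _ _
    have hfix0 : Function.update v 0 (Pi.single i 1 * v 0) = v := by
      rw [hv]
      simp only [single_one_mul, mul_single_one, Pi.mul_apply, Pi.single_eq_same, mul_one]
      exact Function.update_eq_self _ _
    have h1 : ρ v = r (ρ v) (Pi.single i 1) := by
      conv_lhs => rw [← hfixl]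
      exact hρ.2.2 (e i) (heB i) v
    have h2 : ρ v = l (Pi.single i 1) (ρ v) := by
      conv_lhs => rw [← hfix0]
      exact hρ.1 (e i) (heB i) v
    rw [← h1]
    exact h2
  -- (2)
  · intro ρ hρ
    funext a
    show ∑ i, ρ (fun k => Pi.single i (a k i)) = ρ a
    rw [hdiag ρ hρ a]
    refine Finset.sum_congr rfl fun i _ => ?_
    congr 1
    funext k
    rw [mul_single_one]
  -- (3)
  · intro σ hσ i v
    show ∑ j, σ j (fun k => Pi.single i (v k) j) = σ i v
    rw [sum_proj_eq σ (fun k => Pi.single i (v k)) i 0 (fun j hj => Pi.single_eq_of_ne hj _)]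
    congr 1
    funext k
    exact Pi.single_eq_same i (v k)
  -- (4a)
  · intro ρ hρ i
    refine ⟨ρ.compContinuousLinearMap (fun _ => singleCLM A i), ?_, ?_⟩
    · funext v
      rw [ContinuousMultilinearMap.compContinuousLinearMap_apply]
      rfl
    · refine (ContinuousMultilinearMap.norm_compContinuousLinearMap_le _ _).trans ?_
      calc ‖ρ‖ * ∏ _k : Fin (n + 1), ‖singleCLM A i‖
          ≤ ‖ρ‖ * 1 := mul_le_mul_of_nonneg_left
            (Finset.prod_le_one (fun _ _ => norm_nonneg (singleCLM A i)) (fun _ _ => norm_singleCLM_le i))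
            (norm_nonneg ρ)
        _ = ‖ρ‖ := mul_one _
  -- (4b)
  · intro σ hσ
    have hσ' : ∀ i v, l (Pi.single i 1) (r (σ i v) (Pi.single i 1)) = σ i v := hσ
    set τ : ContinuousMultilinearMap ℂ (fun _ : Fin (n + 1) => ∀ i, A i) M :=
      ∑ i, (σ i).compContinuousLinearMap
        (fun _ => (ContinuousLinearMap.proj i : (∀ j, A j) →L[ℂ] A i)) with hτdef
    have hτ : ∀ a, τ a = ∑ i, σ i (fun k => a k i) := by
      intro a
      rw [hτdef, ContinuousMultilinearMap.sum_apply]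
      rfl
    have hgen : ∀ (i : Fin m) (w : Fin (n + 1) → ∀ j, A j) (k₀ : Fin (n + 1)),
        (∀ j, j ≠ i → w k₀ j = 0) → τ w = σ i (fun k => w k i) := by
      intro i w k₀ h
      rw [hτ]
      exact sum_proj_eq σ w i k₀ h
    have hupd : ∀ (i : Fin m) (a : Fin (n + 1) → ∀ j, A j) (p : Fin (n + 1)) (x : ∀ j, A j),
        (∀ j, j ≠ i → x j = 0) → x i = a p i →
        τ (Function.update a p x) = σ i (fun k => a k i) := by
      intro i a p x hx hxi
      rw [hgen i _ p (fun j hj => by rw [Function.update_self]; exact hx j hj)]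
      congr 1
      rw [update_proj, hxi]
      exact Function.update_eq_self _ _
    have hli : ∀ (i j : Fin m) (v : Fin (n + 1) → A j),
        l (Pi.single i 1) (σ j v) = if j = i then σ j v else 0 := by
      intro i j v
      conv_lhs => rw [← hσ' j v]
      rw [← hl]
      rcases eq_or_ne j i with h | h
      · subst h; rw [single_mul_single_same, hσ', if_pos rfl]
      · rw [single_mul_single_ne (Ne.symm h), if_neg h, map_zero,
          ContinuousLinearMap.zero_apply]
    have hri : ∀ (i j : Fin m) (v : Fin (n + 1) → A j),
        r (σ j v) (Pi.single i 1) = if j = i then σ j v else 0 := by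
      intro i j v
      conv_lhs => rw [← hσ' j v]
      rw [← hc, hr]
      rcases eq_or_ne j i with h | h
      · subst h; rw [single_mul_single_same, hσ', if_pos rfl]
      · rw [single_mul_single_ne h, if_neg h, map_zero, map_zero]
    have hlτ : ∀ (i : Fin m) (a : Fin (n + 1) → ∀ j, A j),
        l (Pi.single i 1) (τ a) = σ i (fun k => a k i) := by
      intro i a
      rw [hτ, map_sum]
      simp only [hli]
      simp
    have hrτ : ∀ (i : Fin m) (a : Fin (n + 1) → ∀ j, A j),
        r (τ a) (Pi.single i 1) = σ i (fun k => a k i) := by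
      intro i a
      rw [hτ, map_sum, ContinuousLinearMap.sum_apply]
      simp only [hri]
      simp
    refine ⟨τ, ?_, ⟨?_, ?_, ?_⟩, ?_⟩
    · funext a
      exact hτ a
    -- left relativity
    · intro b hb
      have hb' : b ∈ Submodule.span ℂ (Set.range fun i => (Pi.single i 1 : ∀ j, A j)) :=
        B_subset_span hb
      clear hb
      induction hb' using Submodule.span_induction with
      | mem b hb =>
        obtain ⟨i, rfl⟩ := hb
        intro a
        rw [hupd i a 0 (Pi.single i 1 * a 0)
          (fun j hj => by rw [single_one_mul]; exact Pi.single_eq_of_ne hj _)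
          (by rw [single_one_mul]; exact Pi.single_eq_same i _), hlτ]
      | zero =>
        intro a
        rw [zero_mul, map_zero, ContinuousLinearMap.zero_apply]
        exact τ.map_coord_zero 0 (Function.update_self _ _ _)
      | add b c _ _ ihb ihc =>
        intro a
        rw [add_mul, τ.map_update_add, ihb a, ihc a, map_add, ContinuousLinearMap.add_apply]
      | smul c b _ ih =>
        intro a
        rw [smul_mul_assoc, τ.map_update_smul, ih a, map_smul,
          ContinuousLinearMap.smul_apply]
    -- middle relativity
    · intro b hb
      have hb' : b ∈ Submodule.span ℂ (Set.range fun i => (Pi.single i 1 : ∀ j, A j)) :=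
        B_subset_span hb
      clear hb
      induction hb' using Submodule.span_induction with
      | mem b hb =>
        obtain ⟨i, rfl⟩ := hb
        intro a j
        rw [hupd i a j.castSucc (a j.castSucc * Pi.single i 1)
          (fun j' hj' => by rw [mul_single_one]; exact Pi.single_eq_of_ne hj' _)
          (by rw [mul_single_one]; exact Pi.single_eq_same i _),
          hupd i a j.succ (Pi.single i 1 * a j.succ)
          (fun j' hj' => by rw [single_one_mul]; exact Pi.single_eq_of_ne hj' _)
          (by rw [single_one_mul]; exact Pi.single_eq_same i _)]
      | zero =>
        intro a j
        rw [mul_zero, zero_mul,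
          τ.map_coord_zero j.castSucc (Function.update_self _ _ _),
          τ.map_coord_zero j.succ (Function.update_self _ _ _)]
      | add b c _ _ ihb ihc =>
        intro a j
        rw [mul_add, add_mul, τ.map_update_add, τ.map_update_add, ihb a j, ihc a j]
      | smul c b _ ih =>
        intro a j
        rw [mul_smul_comm, smul_mul_assoc, τ.map_update_smul, τ.map_update_smul, ih a j]
    -- right relativity
    · intro b hb
      have hb' : b ∈ Submodule.span ℂ (Set.range fun i => (Pi.single i 1 : ∀ j, A j)) :=
        B_subset_span hb
      clear hb
      induction hb' using Submodule.span_induction with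
      | mem b hb =>
        obtain ⟨i, rfl⟩ := hb
        intro a
        rw [hupd i a (Fin.last n) (a (Fin.last n) * Pi.single i 1)
          (fun j hj => by rw [mul_single_one]; exact Pi.single_eq_of_ne hj _)
          (by rw [mul_single_one]; exact Pi.single_eq_same i _), hrτ]
      | zero =>
        intro a
        rw [mul_zero, map_zero]
        exact τ.map_coord_zero (Fin.last n) (Function.update_self _ _ _)
      | add b c _ _ ihb ihc =>
        intro a
        rw [mul_add, τ.map_update_add, ihb a, ihc a, map_add]
      | smul c b _ ih =>
        intro a
        rw [mul_smul_comm, τ.map_update_smul, ih a, map_smul]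
    -- norm bound
    · rw [hτdef]
      refine (norm_sum_le _ (fun i => (σ i).compContinuousLinearMap (fun _ => (ContinuousLinearMap.proj i : (∀ j, A j) →L[ℂ] A i)))).trans (Finset.sum_le_sum fun i _ => ?_)
      refine (ContinuousMultilinearMap.norm_compContinuousLinearMap_le _ _).trans ?_
      calc ‖σ i‖ * ∏ _k : Fin (n + 1), ‖(ContinuousLinearMap.proj i : (∀ j, A j) →L[ℂ] A i)‖
          ≤ ‖σ i‖ * 1 := mul_le_mul_of_nonneg_left
            (Finset.prod_le_one (fun _ _ => norm_nonneg (ContinuousLinearMap.proj i : (∀ j, A j) →L[ℂ] A i)) (fun _ _ => norm_projCLM_le i))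
            (norm_nonneg (σ i))
        _ = ‖σ i‖ := mul_one _
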